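/- Assume the perturbed blended dynamics ṡ = (1/N)∑_i F_i(t, s + e_i, z_i), ż_i = Z_i(t, z_i, s + e_i) is ISS with (β, γ̂) for a closed set A, and assume the funnel objective holds so that the synchronization errors satisfy ‖e_i(t)‖_∞ ≤ d_G Ψ(t) for all t ≥ t_0 and all i. Then for any M_{x_0} > 0 and any decreasing w : [0, ∞) → (0, 1] with lim w = 0 there exists γ ∈ 𝒦_∞ such that, for all t ≥ t_0, max_i ‖(y_i(t), z_1(t), ..., z_N(t))‖_A ≤ β(‖((1/N)∑_i y_i(t_0), z_1(t_0), ..., z_N(t_0))‖_A, t − t_0) + γ(sup_{s∈[t_0,t)} d_G Ψ(s) w(t − s)) + d_G Ψ(t), for any solution with ‖((1/N)∑_i y_i(t_0), z_1(t_0), ..., z_N(t_0))‖_A ≤ M_{x_0}. -/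

import Mathlib

open Filter

def ClassKinf (γ : ℝ → ℝ) : Prop :=
  ContinuousOn γ (Set.Ici 0) ∧ StrictMonoOn γ (Set.Ici 0) ∧ γ 0 = 0 ∧
    Tendsto γ atTop atTop

def ClassKL (β : ℝ → ℝ → ℝ) : Prop :=
  (∀ t ∈ Set.Ici (0 : ℝ), ContinuousOn (fun r => β r t) (Set.Ici 0) ∧
      StrictMonoOn (fun r => β r t) (Set.Ici 0) ∧ β 0 t = 0) ∧
  (∀ r > (0 : ℝ), AntitoneOn (β r) (Set.Ici 0) ∧ Tendsto (β r) atTop (nhds 0)) ∧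
  (∀ r ≥ (0 : ℝ), ∀ t ≥ (0 : ℝ), 0 ≤ β r t)

open MeasureTheory intervalIntegral in
lemma exists_kinf_majorant (g : ℝ → ℝ) (hmono : Monotone g) (hnn : ∀ r, 0 ≤ g r)
    (C0 : ℝ) (hbd : ∀ r, g r ≤ C0) (hz : g 0 = 0)
    (hsmall : ∀ ε > (0:ℝ), ∃ δ > (0:ℝ), ∀ s, 0 ≤ s → s ≤ δ → g s < ε) :
    ∃ γ : ℝ → ℝ, ClassKinf γ ∧ ∀ r, 0 ≤ r → g r ≤ γ r := by
  set Φ : ℝ → ℝ := fun r => ∫ t in (0:ℝ)..1, g (r * (1 + t)) with hΦdef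
  have hint : ∀ r : ℝ, IntervalIntegrable (fun t => g (r * (1 + t))) volume 0 1 := by
    intro r
    rcases le_or_gt 0 r with hr | hr
    · have : Monotone fun t : ℝ => g (r * (1 + t)) := fun a b hab => hmono (by nlinarith)
      exact this.intervalIntegrable
    · have : Antitone fun t : ℝ => g (r * (1 + t)) := fun a b hab => hmono (by nlinarith)
      exact this.intervalIntegrable
  have hΦmono : ∀ r1 r2 : ℝ, 0 ≤ r1 → r1 ≤ r2 → Φ r1 ≤ Φ r2 := by
    intro r1 r2 h0 h12
    refine integral_mono_on zero_le_one (hint r1) (hint r2) (fun x hx => hmono ?_)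
    rcases hx with ⟨hx0, hx1⟩; nlinarith
  have hΦnn : ∀ r, 0 ≤ Φ r := fun r =>
    integral_nonneg zero_le_one (fun u _ => hnn _)
  have hgΦ : ∀ r, 0 ≤ r → g r ≤ Φ r := by
    intro r hr
    have : (∫ t in (0:ℝ)..1, g r) ≤ Φ r := by
      refine integral_mono_on zero_le_one (intervalIntegrable_const) (hint r)
        (fun x hx => hmono ?_)
      rcases hx with ⟨hx0, hx1⟩; nlinarith
    simpa using this
  have hΦg : ∀ r, 0 ≤ r → Φ r ≤ g (2 * r) := by
    intro r hr
    have : Φ r ≤ ∫ t in (0:ℝ)..1, g (2 * r) := by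
      refine integral_mono_on zero_le_one (hint r) (intervalIntegrable_const)
        (fun x hx => hmono ?_)
      rcases hx with ⟨hx0, hx1⟩; nlinarith
    simpa using this
  have hΦ0 : Φ 0 = 0 := by simp [hΦdef, hz]
  refine ⟨fun r => r + Φ r, ⟨?_, ?_, ?_, ?_⟩, fun r hr => (hgΦ r hr).trans (le_add_of_nonneg_left hr)⟩
  · intro r0 hr0
    rcases eq_or_lt_of_le (Set.mem_Ici.mp hr0) with h0 | hpos
    · subst h0
      have hΦtend : Tendsto Φ (nhdsWithin 0 (Set.Ici 0)) (nhds 0) := by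
        have htend2 : Tendsto (fun r => g (2 * r)) (nhdsWithin 0 (Set.Ici 0)) (nhds 0) := by
          rw [Metric.tendsto_nhdsWithin_nhds]
          intro ε hε
          obtain ⟨δ, hδ, hδ'⟩ := hsmall ε hε
          refine ⟨δ / 2, by linarith, fun x hx hdx => ?_⟩
          have hx0 : (0:ℝ) ≤ x := hx
          have : |x - 0| < δ / 2 := by simpa [Real.dist_eq] using hdx
          have hxd : 2 * x ≤ δ := by rw [abs_sub_lt_iff] at this; linarith
          have h1 := hδ' (2 * x) (by linarith) hxd
          rw [Real.dist_eq, abs_sub_lt_iff]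
          constructor <;> [linarith; linarith [hnn (2 * x)]]
        refine squeeze_zero' (Eventually.of_forall fun r => hΦnn r) ?_ htend2
        filter_upwards [self_mem_nhdsWithin] with r hr using hΦg r hr
      have : Tendsto (fun r => r + Φ r) (nhdsWithin 0 (Set.Ici 0)) (nhds (0 + 0)) :=
        (tendsto_id.mono_left nhdsWithin_le_nhds).add hΦtend
      simpa [ContinuousWithinAt, hΦ0] using this
    · have hΦcont : ContinuousAt Φ r0 := by
        set C1 : ℝ := max C0 0 with hC1
        apply continuousAt_of_dominated_interval (bound := fun _ => C1)
        · exact Eventually.of_forall fun x =>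
            ((hmono.measurable).comp
              (by fun_prop : Measurable fun t : ℝ => x * (1 + t))).aestronglyMeasurable
        · refine Eventually.of_forall fun x => Eventually.of_forall fun t _ => ?_
          rw [Real.norm_eq_abs, abs_of_nonneg (hnn _)]
          exact le_max_of_le_left (hbd _)
        · exact intervalIntegrable_const
        · have hcount : Set.Countable {t : ℝ | ¬ ContinuousAt (fun x => g (x * (1 + t))) r0} := by
            have hsub : {t : ℝ | ¬ ContinuousAt (fun x => g (x * (1 + t))) r0} ⊆
                (fun t : ℝ => r0 * (1 + t)) ⁻¹' {x | ¬ ContinuousAt g x} := by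
              intro t ht
              simp only [Set.mem_setOf_eq, Set.mem_preimage] at ht ⊢
              intro hc
              have hf : ContinuousAt (fun x : ℝ => x * (1 + t)) r0 :=
                continuousAt_id.mul continuousAt_const
              have hc' : ContinuousAt g ((fun x : ℝ => x * (1 + t)) r0) := by
                simpa [mul_comm] using hc
              exact ht (ContinuousAt.comp (f := fun x : ℝ => x * (1 + t)) hc' hf)
            refine Set.Countable.mono hsub ?_
            refine Set.Countable.preimage hmono.countable_not_continuousAt ?_
            intro a b hab
            have : r0 * (1 + a) = r0 * (1 + b) := hab
            have := mul_left_cancel₀ (ne_of_gt hpos) this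
            linarith
          have hae : ∀ᵐ t : ℝ, ContinuousAt (fun x => g (x * (1 + t))) r0 := by
            rw [MeasureTheory.ae_iff]
            exact Set.Countable.measure_zero hcount _
          exact hae.mono fun t ht _ => ht
      exact (continuousAt_id.add hΦcont).continuousWithinAt
  · intro a ha b hb hab
    exact add_lt_add_of_lt_of_le hab (hΦmono a b ha hab.le)
  · simp [hΦ0]
  · exact tendsto_atTop_mono (fun r => le_add_of_nonneg_right (hΦnn r)) tendsto_id
/-- Emergent behavior (Theorem 3): if the perturbed blended dynamics is ISS with `(β, γ̂)`
for a closed set `A`, then for any `M_{x0} > 0` and decaying weight `w` there is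
`γ ∈ 𝒦_∞` such that every closed-loop network trajectory (whose average `s` solves the
perturbed blended dynamics with inputs `e_i = y_i - s` bounded by `d_G Ψ`) satisfies
`‖(y_i(t), z(t))‖_A ≤ β(‖(s(t_0), z(t_0))‖_A, t - t_0)
  + γ(sup_{s∈[t_0,t)} d_G Ψ(s) w(t-s)) + d_G Ψ(t)`. -/
theorem stmt9 {N m : ℕ} (hN : 0 < N) (nz : Fin N → ℕ)
    (F : (i : Fin N) → ℝ → (Fin m → ℝ) → (Fin (nz i) → ℝ) → (Fin m → ℝ))
    (Z : (i : Fin N) → ℝ → (Fin (nz i) → ℝ) → (Fin m → ℝ) → (Fin (nz i) → ℝ))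
    (A : Set ((Fin m → ℝ) × ((i : Fin N) → Fin (nz i) → ℝ))) (hA : IsClosed A)
    (β : ℝ → ℝ → ℝ) (γhat : ℝ → ℝ) (hβ : ClassKL β) (hγ : ClassKinf γhat)
    (dG : ℝ) (hdG : 0 ≤ dG) (Ψ : ℝ → ℝ) (hΨ0 : ∀ t, 0 ≤ Ψ t)
    (hΨbd : ∃ MΨ, ∀ t, Ψ t ≤ MΨ)
    -- ISS of the perturbed blended dynamics for the closed set `A`, from any initial time:
    (hISS : ∀ (t0' : ℝ) (σ : ℝ → Fin m → ℝ) (ζ : (i : Fin N) → ℝ → Fin (nz i) → ℝ)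
        (e : Fin N → ℝ → Fin m → ℝ),
        (∀ t ≥ t0', HasDerivAt σ ((N : ℝ)⁻¹ • ∑ i, F i t (σ t + e i t) (ζ i t)) t) →
        (∀ i, ∀ t ≥ t0', HasDerivAt (ζ i) (Z i t (ζ i t) (σ t + e i t)) t) →
        ∀ t ≥ t0',
          Metric.infDist ((σ t, fun i => ζ i t)) A ≤
            β (Metric.infDist ((σ t0', fun i => ζ i t0')) A) (t - t0') +
            γhat (sSup {r | ∃ s ∈ Set.Ico t0' t, ∃ i, r = ‖e i s‖})) :
    ∀ Mx0 > (0 : ℝ), ∀ w : ℝ → ℝ,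
      (∀ t ≥ (0 : ℝ), 0 < w t ∧ w t ≤ 1) → AntitoneOn w (Set.Ici 0) →
      Tendsto w atTop (nhds 0) →
      ∃ γ : ℝ → ℝ, ClassKinf γ ∧
        ∀ (t0 : ℝ) (y : Fin N → ℝ → Fin m → ℝ)
          (z : (i : Fin N) → ℝ → Fin (nz i) → ℝ),
          -- the coupling terms cancel in the average:
          (∀ t ≥ t0, HasDerivAt (fun τ => (N : ℝ)⁻¹ • ∑ i, y i τ)
              ((N : ℝ)⁻¹ • ∑ i, F i t (y i t) (z i t)) t) →
          (∀ i, ∀ t ≥ t0, HasDerivAt (z i) (Z i t (z i t) (y i t)) t) →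
          -- funnel objective: synchronization errors bounded by `d_G Ψ`:
          (∀ i, ∀ t ≥ t0, ‖y i t - (N : ℝ)⁻¹ • ∑ k, y k t‖ ≤ dG * Ψ t) →
          Metric.infDist (((N : ℝ)⁻¹ • ∑ k, y k t0, fun i => z i t0)) A ≤ Mx0 →
          ∀ t ≥ t0, ∀ i,
            Metric.infDist ((y i t, fun j => z j t)) A ≤
              β (Metric.infDist (((N : ℝ)⁻¹ • ∑ k, y k t0, fun j => z j t0)) A)
                (t - t0) +
              γ (sSup {r | ∃ s ∈ Set.Ico t0 t, r = dG * Ψ s * w (t - s)}) +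
              dG * Ψ t := by
  intro Mx0 hMx0 w hw hwA hwT
  obtain ⟨MΨ, hMΨ⟩ := hΨbd
  have hγmono : ∀ a b : ℝ, 0 ≤ a → a ≤ b → γhat a ≤ γhat b := fun a b ha hab =>
    hγ.2.1.monotoneOn (Set.mem_Ici.mpr ha) (Set.mem_Ici.mpr (ha.trans hab)) hab
  have hγnn : ∀ a : ℝ, 0 ≤ a → 0 ≤ γhat a := fun a ha => by
    have h := hγmono 0 a le_rfl ha; rw [hγ.2.2.1] at h; exact h
  have hβnn : ∀ r, 0 ≤ r → ∀ t, 0 ≤ t → 0 ≤ β r t := fun r hr t ht => hβ.2.2 r hr t ht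
  have hβmono1 : ∀ t, 0 ≤ t → ∀ r1 r2, 0 ≤ r1 → r1 ≤ r2 → β r1 t ≤ β r2 t := by
    intro t ht r1 r2 h1 h12
    exact ((hβ.1 t (Set.mem_Ici.mpr ht)).2.1.monotoneOn) (Set.mem_Ici.mpr h1)
      (Set.mem_Ici.mpr (h1.trans h12)) h12
  set D : ℝ := dG * max MΨ 0 with hDdef
  have hD : 0 ≤ D := mul_nonneg hdG (le_max_right _ _)
  have hΨD : ∀ t, dG * Ψ t ≤ D := fun t =>
    mul_le_mul_of_nonneg_left ((hMΨ t).trans (le_max_left _ _)) hdG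
  have hΨnn : ∀ t, 0 ≤ dG * Ψ t := fun t => mul_nonneg hdG (hΨ0 t)
  set B : ℝ := β Mx0 0 + γhat D with hBdef
  have hB : 0 < B := by
    have h1 : 0 < β Mx0 0 := by
      have h := (hβ.1 0 (Set.mem_Ici.mpr le_rfl)).2.1 (Set.mem_Ici.mpr le_rfl)
        (Set.mem_Ici.mpr hMx0.le) hMx0
      have h' : β 0 0 < β Mx0 0 := h
      rw [(hβ.1 0 (Set.mem_Ici.mpr le_rfl)).2.2] at h'
      exact h'
    have h2 := hγnn D hD
    rw [hBdef]; linarith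
  haveI : Nonempty {x : ℝ // 0 ≤ x} := ⟨⟨0, le_rfl⟩⟩
  have hwpos : ∀ T : ℝ, 0 ≤ T → 0 < w T := fun T hT => (hw T hT).1
  set g : ℝ → ℝ :=
    fun r => ⨅ T : {x : ℝ // 0 ≤ x}, (β B T.1 + γhat (min D (max r 0 / w T.1))) with hgdef
  have hterm_nn : ∀ r : ℝ, ∀ T : {x : ℝ // 0 ≤ x},
      0 ≤ β B T.1 + γhat (min D (max r 0 / w T.1)) := by
    intro r T
    have h1 := hβnn B hB.le T.1 T.2
    have h2 : 0 ≤ min D (max r 0 / w T.1) :=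
      le_min hD (div_nonneg (le_max_right _ _) (hwpos T.1 T.2).le)
    have h3 := hγnn _ h2
    linarith
  have hgnn : ∀ r, 0 ≤ g r := fun r => le_ciInf (hterm_nn r)
  have hbbl : ∀ r : ℝ, BddBelow (Set.range fun T : {x : ℝ // 0 ≤ x} =>
      β B T.1 + γhat (min D (max r 0 / w T.1))) :=
    fun r => ⟨0, by rintro x ⟨T, rfl⟩; exact hterm_nn r T⟩
  have hgle : ∀ r : ℝ, ∀ T : {x : ℝ // 0 ≤ x},
      g r ≤ β B T.1 + γhat (min D (max r 0 / w T.1)) :=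
    fun r T => ciInf_le (hbbl r) T
  have hgmono : Monotone g := by
    intro r1 r2 h12
    refine ciInf_mono (hbbl r1) fun T => ?_
    have h2 : 0 ≤ min D (max r1 0 / w T.1) :=
      le_min hD (div_nonneg (le_max_right _ _) (hwpos T.1 T.2).le)
    have harg : min D (max r1 0 / w T.1) ≤ min D (max r2 0 / w T.1) :=
      min_le_min le_rfl ((div_le_div_iff_of_pos_right (hwpos T.1 T.2)).2 (max_le_max h12 le_rfl))
    exact add_le_add le_rfl (hγmono _ _ h2 harg)
  have hgbd : ∀ r, g r ≤ β B 0 + γhat D := by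
    intro r
    refine (hgle r ⟨0, le_rfl⟩).trans ?_
    have h2 : 0 ≤ min D (max r 0 / w 0) :=
      le_min hD (div_nonneg (le_max_right _ _) (hwpos 0 le_rfl).le)
    exact add_le_add le_rfl (hγmono _ D h2 (min_le_left _ _))
  have hβBε : ∀ ε > (0:ℝ), ∃ T : ℝ, 0 ≤ T ∧ β B T < ε := by
    intro ε hε
    have h1 : ∀ᶠ T in atTop, β B T < ε := (hβ.2.1 B hB).2.eventually (gt_mem_nhds hε)
    obtain ⟨T, hT1, hT2⟩ := (h1.and (eventually_ge_atTop 0)).exists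
    exact ⟨T, hT2, hT1⟩
  have hg0 : g 0 = 0 := by
    have hlt : ∀ ε > (0:ℝ), g 0 < ε := by
      intro ε hε
      obtain ⟨T, hT0, hTε⟩ := hβBε ε hε
      calc g 0 ≤ β B T + γhat (min D (max 0 0 / w T)) := hgle 0 ⟨T, hT0⟩
        _ = β B T := by simp [min_eq_right hD, hγ.2.2.1]
        _ < ε := hTε
    by_contra hne
    have hpos : 0 < g 0 := lt_of_le_of_ne (hgnn 0) (Ne.symm hne)
    exact absurd (hlt _ hpos) (lt_irrefl _)
  have hsmall : ∀ ε > (0:ℝ), ∃ δ > (0:ℝ), ∀ s, 0 ≤ s → s ≤ δ → g s < ε := by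
    intro ε hε
    obtain ⟨T, hT0, hTε⟩ := hβBε (ε / 2) (by linarith)
    obtain ⟨δ', hδ'pos, hδ'⟩ : ∃ δ' > (0:ℝ), ∀ x, 0 ≤ x → x ≤ δ' → γhat x < ε / 2 := by
      have hc : ContinuousWithinAt γhat (Set.Ici 0) 0 := hγ.1 0 (Set.mem_Ici.mpr le_rfl)
      have htd : Tendsto γhat (nhdsWithin 0 (Set.Ici 0)) (nhds 0) := by
        have := hc.tendsto
        rwa [hγ.2.2.1] at this
      have hev : {x | γhat x < ε / 2} ∈ nhdsWithin 0 (Set.Ici 0) :=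
        htd.eventually (gt_mem_nhds (by linarith : (0:ℝ) < ε / 2))
      rw [Metric.mem_nhdsWithin_iff] at hev
      obtain ⟨δ0, hδ0, h⟩ := hev
      refine ⟨δ0 / 2, by linarith, fun x hx1 hx2 => ?_⟩
      exact h ⟨by rw [Metric.mem_ball, Real.dist_eq, sub_zero, abs_of_nonneg hx1]; linarith,
        Set.mem_Ici.mpr hx1⟩
    refine ⟨δ' * w T, mul_pos hδ'pos (hwpos T hT0), fun s hs0 hsδ => ?_⟩
    have h2 : 0 ≤ min D (max s 0 / w T) :=
      le_min hD (div_nonneg (le_max_right _ _) (hwpos T hT0).le)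
    have harg : min D (max s 0 / w T) ≤ δ' := by
      refine (min_le_right _ _).trans ?_
      rw [max_eq_left hs0, div_le_iff₀ (hwpos T hT0)]
      exact hsδ
    have h3 : γhat (min D (max s 0 / w T)) < ε / 2 := hδ' _ h2 harg
    have h4 := hgle s ⟨T, hT0⟩
    have h5 : g s ≤ β B T + γhat (min D (max s 0 / w T)) := h4
    linarith
  obtain ⟨γ, hγK, hγg⟩ := exists_kinf_majorant g hgmono hgnn _ hgbd hg0 hsmall
  refine ⟨γ, hγK, ?_⟩
  intro t0 y z hydot hzdot hfun hx0
  set σ : ℝ → Fin m → ℝ := fun τ => (N : ℝ)⁻¹ • ∑ i, y i τ with hσdef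
  set e : Fin N → ℝ → Fin m → ℝ := fun i τ => y i τ - σ τ with hedef
  have hee : ∀ i τ, σ τ + e i τ = y i τ := fun i τ => by
    rw [hedef]; exact add_sub_cancel _ _
  have hISS' : ∀ t1, t0 ≤ t1 → ∀ t, t1 ≤ t →
      Metric.infDist ((σ t, fun j => z j t)) A ≤
        β (Metric.infDist ((σ t1, fun j => z j t1)) A) (t - t1) +
        γhat (sSup {r | ∃ s ∈ Set.Ico t1 t, ∃ i, r = ‖e i s‖}) := by
    intro t1 ht1 t ht
    refine hISS t1 σ z e ?_ ?_ t ht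
    · intro τ hτ
      have h := hydot τ (le_trans ht1 hτ)
      simp only [hee]
      exact h
    · intro i τ hτ
      have h := hzdot i τ (le_trans ht1 hτ)
      simp only [hee]
      exact h
  have hebd : ∀ s, t0 ≤ s → ∀ i, ‖e i s‖ ≤ dG * Ψ s := fun s hs i => hfun i s hs
  have hsSup_le : ∀ t1 t c, t0 ≤ t1 → 0 ≤ c →
      (∀ s, s ∈ Set.Ico t1 t → dG * Ψ s ≤ c) →
      sSup {r | ∃ s ∈ Set.Ico t1 t, ∃ i, r = ‖e i s‖} ≤ c := by
    intro t1 t c ht1 hc hbd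
    refine Real.sSup_le ?_ hc
    rintro r ⟨s, hs, i, rfl⟩
    exact (hebd s (ht1.trans hs.1) i).trans (hbd s hs)
  have hsSup_nn : ∀ t1 t : ℝ, 0 ≤ sSup {r | ∃ s ∈ Set.Ico t1 t, ∃ i, r = ‖e i s‖} := by
    intro t1 t
    refine Real.sSup_nonneg ?_
    rintro r ⟨s, hs, i, rfl⟩
    exact norm_nonneg _
  intro t ht i
  set S : ℝ := sSup {r | ∃ s ∈ Set.Ico t0 t, r = dG * Ψ s * w (t - s)} with hSdef
  have hSnn : 0 ≤ S := by
    rw [hSdef]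
    refine Real.sSup_nonneg ?_
    rintro r ⟨s, hs, rfl⟩
    exact mul_nonneg (hΨnn s) (hwpos (t - s) (by linarith [hs.2] : (0:ℝ) ≤ t - s)).le
  have hSbdd : BddAbove {r | ∃ s ∈ Set.Ico t0 t, r = dG * Ψ s * w (t - s)} := by
    refine ⟨D, ?_⟩
    rintro r ⟨s, hs, rfl⟩
    have h1 : w (t - s) ≤ 1 := (hw (t - s) (by linarith [hs.2])).2
    have h2 := hΨD s
    have h3 := hΨnn s
    have h4 := (hwpos (t - s) (by linarith [hs.2])).le
    nlinarith
  have hkey : ∀ s, s ∈ Set.Ico t0 t → ∀ T, 0 ≤ T → t - s ≤ T → dG * Ψ s ≤ S / w T := by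
    intro s hs T hT hts
    have hwts : 0 < w (t - s) := hwpos _ (by linarith [hs.2])
    have hwT : 0 < w T := hwpos _ hT
    have hmem : dG * Ψ s * w (t - s) ≤ S := le_csSup hSbdd ⟨s, hs, rfl⟩
    have h1 : dG * Ψ s ≤ S / w (t - s) := (le_div_iff₀ hwts).2 hmem
    have h2 : w T ≤ w (t - s) :=
      hwA (Set.mem_Ici.mpr (by linarith [hs.2] : (0:ℝ) ≤ t - s)) (Set.mem_Ici.mpr hT) hts
    have h3 : S / w (t - s) ≤ S / w T := div_le_div_of_nonneg_left hSnn hwT h2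
    linarith
  have hclaim : ∀ T, 0 ≤ T →
      Metric.infDist ((σ t, fun j => z j t)) A ≤
        β (Metric.infDist ((σ t0, fun j => z j t0)) A) (t - t0) +
          (β B T + γhat (min D (S / w T))) := by
    intro T hT
    have hminnn : 0 ≤ min D (S / w T) := le_min hD (div_nonneg hSnn (hwpos T hT).le)
    by_cases hTt : t - t0 ≤ T
    · have h1 := hISS' t0 le_rfl t ht
      have h2 : sSup {r | ∃ s ∈ Set.Ico t0 t, ∃ i, r = ‖e i s‖} ≤ min D (S / w T) :=
        hsSup_le t0 t _ le_rfl hminnn fun s hs =>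
          le_min (hΨD s) (hkey s hs T hT (by linarith [hs.1]))
      have h3 := hγmono _ _ (hsSup_nn t0 t) h2
      have h4 := hβnn B hB.le T hT
      linarith
    · push_neg at hTt
      have ht01 : t0 ≤ t - T := by linarith
      have ht1t : t - T ≤ t := by linarith
      have hV1 : Metric.infDist ((σ (t - T), fun j => z j (t - T))) A ≤ B := by
        have h1 := hISS' t0 le_rfl (t - T) ht01
        have h2 : sSup {r | ∃ s ∈ Set.Ico t0 (t - T), ∃ i, r = ‖e i s‖} ≤ D :=
          hsSup_le t0 (t - T) D le_rfl hD fun s _ => hΨD s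
        have h3 := hγmono _ _ (hsSup_nn t0 (t - T)) h2
        have hb1 : β (Metric.infDist ((σ t0, fun j => z j t0)) A) (t - T - t0) ≤
            β Mx0 (t - T - t0) :=
          hβmono1 _ (by linarith) _ _ Metric.infDist_nonneg hx0
        have hb2 : β Mx0 (t - T - t0) ≤ β Mx0 0 :=
          (hβ.2.1 Mx0 hMx0).1 (Set.mem_Ici.mpr le_rfl) (Set.mem_Ici.mpr (by linarith))
            (by linarith)
        rw [hBdef]
        linarith
      have h1 := hISS' (t - T) ht01 t ht1t
      have htT : t - (t - T) = T := by ring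
      rw [htT] at h1
      have h2 : sSup {r | ∃ s ∈ Set.Ico (t - T) t, ∃ i, r = ‖e i s‖} ≤ min D (S / w T) :=
        hsSup_le (t - T) t _ ht01 hminnn fun s hs =>
          le_min (hΨD s) (hkey s ⟨ht01.trans hs.1, hs.2⟩ T hT (by linarith [hs.1]))
      have h3 := hγmono _ _ (hsSup_nn (t - T) t) h2
      have h4 : β (Metric.infDist ((σ (t - T), fun j => z j (t - T))) A) T ≤ β B T :=
        hβmono1 T hT _ _ Metric.infDist_nonneg hV1
      have h5 : 0 ≤ β (Metric.infDist ((σ t0, fun j => z j t0)) A) (t - t0) :=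
        hβnn _ Metric.infDist_nonneg _ (by linarith)
      linarith
  have hgS : Metric.infDist ((σ t, fun j => z j t)) A ≤
      β (Metric.infDist ((σ t0, fun j => z j t0)) A) (t - t0) + g S := by
    have hsub : Metric.infDist ((σ t, fun j => z j t)) A -
        β (Metric.infDist ((σ t0, fun j => z j t0)) A) (t - t0) ≤ g S := by
      rw [hgdef]
      refine le_ciInf fun T => ?_
      have h := hclaim T.1 T.2
      rw [max_eq_left hSnn]
      linarith
    linarith
  have hoff : Metric.infDist ((y i t, fun j => z j t)) A ≤
      Metric.infDist ((σ t, fun j => z j t)) A + dG * Ψ t := by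
    have h1 := Metric.infDist_le_infDist_add_dist
      (x := ((y i t, fun j => z j t) : (Fin m → ℝ) × ((i : Fin N) → Fin (nz i) → ℝ)))
      (y := (σ t, fun j => z j t)) (s := A)
    have h2 : dist ((y i t, fun j => z j t) :
        (Fin m → ℝ) × ((i : Fin N) → Fin (nz i) → ℝ)) ((σ t, fun j => z j t)) =
        dist (y i t) (σ t) := by
      rw [Prod.dist_eq]
      simp [dist_nonneg]
    have h3 : dist (y i t) (σ t) ≤ dG * Ψ t := by
      rw [dist_eq_norm]
      exact hfun i t ht
    rw [h2] at h1
    linarith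
  have hγS : g S ≤ γ S := hγg S hSnn
  show Metric.infDist ((y i t, fun j => z j t)) A ≤
    β (Metric.infDist ((σ t0, fun j => z j t0)) A) (t - t0) + γ S + dG * Ψ t
  linarith
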